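/- Let c be an integer and φ(z) = z² + c as a map ℚ → ℚ. Suppose α ∈ ℚ is a wandering point for φ, i.e. the iterates φ^[n](α), n ≥ 0, are pairwise distinct. Then every real number L such that h(φ^[k](α))/2^k tends to L as k → ∞ satisfies L ≥ (1/32)·max(log|c|, 1). -/

import Mathlib

open Filter


noncomputable def ratHeight (q : ℚ) : ℝ := Real.log (max (|q.num| : ℝ) (q.den : ℝ))

/-- the orbit -/
def orb (c : ℤ) (α : ℚ) (k : ℕ) : ℚ := (fun z : ℚ => z ^ 2 + (c : ℚ))^[k] α

lemma orb_zero (c : ℤ) (α : ℚ) : orb c α 0 = α := rfl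

lemma orb_succ (c : ℤ) (α : ℚ) (k : ℕ) : orb c α (k+1) = (orb c α k)^2 + (c:ℚ) := by
  unfold orb
  rw [Function.iterate_succ_apply']

lemma ratHeight_ge_log_den (z : ℚ) : Real.log z.den ≤ ratHeight z := by
  unfold ratHeight
  apply Real.log_le_log (by exact_mod_cast z.pos) (le_max_right _ _)

lemma ratHeight_nonneg (z : ℚ) : 0 ≤ ratHeight z := by
  have h := ratHeight_ge_log_den z
  have h1 : (1:ℝ) ≤ (z.den:ℝ) := by exact_mod_cast z.pos
  have := Real.log_nonneg h1
  linarith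

lemma ratHeight_ge_log_abs (z : ℚ) : Real.log |(z:ℝ)| ≤ ratHeight z := by
  rcases le_or_gt |(z:ℝ)| 1 with h | h
  · exact le_trans (Real.log_nonpos (abs_nonneg _) h) (ratHeight_nonneg z)
  · unfold ratHeight
    apply Real.log_le_log (by linarith)
    apply le_max_of_le_left
    have hd : (1:ℝ) ≤ (z.den:ℝ) := by exact_mod_cast z.pos
    have : (z:ℝ) = (z.num:ℝ) / (z.den:ℝ) := by
      rw [Rat.cast_def]
    rw [this, abs_div, abs_of_pos (by linarith : (0:ℝ) < (z.den:ℝ))]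
    rw [div_le_iff₀ (by linarith)]
    nlinarith [abs_nonneg ((z.num:ℝ))]


lemma den_step (c : ℤ) (z : ℚ) : (z^2 + (c:ℚ)).den = z.den^2 := by
  have hred : IsCoprime (z.num) (z.den : ℤ) :=
    Int.isCoprime_iff_gcd_eq_one.mpr z.reduced
  have hcop : IsCoprime (z.num^2 + c * (z.den:ℤ)^2) ((z.den:ℤ)^2) :=
    (hred.pow).add_mul_right_left c
  have hb0 : (0:ℤ) < (z.den:ℤ)^2 := by positivity
  have hd : ((z.den:ℚ)) ≠ 0 := by
    exact_mod_cast Nat.cast_ne_zero.mpr z.den_nz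
  have hz : (z.num:ℚ) = z * (z.den:ℚ) := ((div_eq_iff hd).mp (Rat.num_div_den z))
  have heq : z^2 + (c:ℚ) = ((z.num^2 + c * (z.den:ℤ)^2 : ℤ) : ℚ) / (((z.den:ℤ)^2 : ℤ) : ℚ) := by
    rw [eq_div_iff (by positivity)]
    push_cast
    rw [hz]
    ring
  rw [heq]
  exact_mod_cast Rat.den_div_eq_of_coprime hb0 (Int.isCoprime_iff_gcd_eq_one.mp hcop)


lemma growth (c : ℤ) (M : ℝ) (hM : 1 ≤ M) (hc : |(c:ℝ)| ≤ M) (X : ℕ → ℝ)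
    (hX : ∀ k, X (k+1) = (X k)^2 + (c:ℝ)) (n : ℕ) (h4 : 4*M ≤ (X n)^2) :
    ∀ k, 2 * (|X n|/2)^(2^k) ≤ |X (n+k)| := by
  set t : ℝ := |X n|/2 with htdef
  have htM : M ≤ t^2 := by
    rw [htdef, div_pow]
    nlinarith [sq_abs (X n)]
  have ht : 1 ≤ t := by nlinarith [abs_nonneg (X n)]
  intro k
  induction k with
  | zero => simp [htdef]; linarith
  | succ k ih =>
    have h1 : X (n+(k+1)) = (X (n+k))^2 + (c:ℝ) := by
      rw [show n + (k+1) = (n+k)+1 by ring, hX]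
    have habs : (X (n+k))^2 - M ≤ |X (n+(k+1))| := by
      rw [h1]
      have h3 := le_abs_self ((X (n+k))^2 + (c:ℝ))
      have h4' := neg_abs_le ((c:ℝ))
      linarith
    have hpow : t^(2^(k+1)) = (t^(2^k))^2 := by
      rw [← pow_mul, pow_succ]
    have htle : t^2 ≤ t^(2^(k+1)) :=
      pow_le_pow_right₀ ht (by { have := Nat.one_le_two_pow (n := k); omega })
    have hX2 : (2*t^(2^k))^2 ≤ (X (n+k))^2 := by
      rw [← sq_abs (X (n+k))]
      have h0 : 0 ≤ 2*t^(2^k) := by positivity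
      exact pow_le_pow_left₀ h0 ih 2
    have ht1 : (1:ℝ) ≤ t^(2^(k+1)) := by
      have := pow_le_pow_left₀ (by norm_num : (0:ℝ) ≤ 1) ht (2^(k+1))
      simpa using this
    nlinarith [hX2, habs, htM, htle, hpow]

lemma orb_cast_succ (c : ℤ) (α : ℚ) (k : ℕ) :
    ((orb c α (k+1) : ℚ) : ℝ) = ((orb c α k : ℚ) : ℝ)^2 + (c:ℝ) := by
  rw [orb_succ]; push_cast; ring

lemma escape_bound (c : ℤ) (α : ℚ) (L : ℝ)
    (hT : Tendsto (fun k : ℕ => ratHeight (orb c α k) / (2:ℝ)^k) atTop (nhds L))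
    (M : ℝ) (hM : 1 ≤ M) (hc : |(c:ℝ)| ≤ M) (n : ℕ)
    (h4 : 4*M ≤ ((orb c α n : ℚ):ℝ)^2) :
    (Real.log |((orb c α n : ℚ):ℝ)| - Real.log 2) / 2^n ≤ L := by
  set X : ℕ → ℝ := fun k => ((orb c α k : ℚ):ℝ) with hXdef
  have hXrec : ∀ k, X (k+1) = (X k)^2 + (c:ℝ) := fun k => orb_cast_succ c α k
  have hg := growth c M hM hc X hXrec n h4
  have hXn2 : 2 ≤ |X n| := by nlinarith [sq_abs (X n), abs_nonneg (X n)]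
  have key : ∀ k, (Real.log |X n| - Real.log 2)/2^n ≤ ratHeight (orb c α (n+k)) / 2^(n+k) := by
    intro k
    have h1 := hg k
    have hpos : (0:ℝ) < 2 * (|X n|/2)^(2^k) := by positivity
    have hlog : Real.log (2 * (|X n|/2)^(2^k)) ≤ Real.log |X (n+k)| :=
      Real.log_le_log hpos h1
    have hexp : Real.log (2 * (|X n|/2)^(2^k))
        = Real.log 2 + (2^k : ℕ) * (Real.log |X n| - Real.log 2) := by
      rw [Real.log_mul (by norm_num) (by positivity), Real.log_pow,
        Real.log_div (by linarith) (by norm_num)]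
    have hh := ratHeight_ge_log_abs (orb c α (n+k))
    have hbound : (2^k : ℝ) * (Real.log |X n| - Real.log 2) ≤ ratHeight (orb c α (n+k)) := by
      have h2 : (0:ℝ) ≤ Real.log 2 := Real.log_nonneg (by norm_num)
      push_cast at hexp
      linarith
    rw [div_le_div_iff₀ (by positivity) (by positivity)]
    calc (Real.log |X n| - Real.log 2) * 2^(n+k)
        = ((2:ℝ)^k * (Real.log |X n| - Real.log 2)) * 2^n := by rw [pow_add]; ring
      _ ≤ ratHeight (orb c α (n+k)) * 2^n := by
          apply mul_le_mul_of_nonneg_right hbound (by positivity)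
  have hsub : Tendsto (fun k : ℕ => ratHeight (orb c α (k+n)) / (2:ℝ)^(k+n)) atTop (nhds L) :=
    hT.comp (tendsto_add_atTop_nat n)
  exact ge_of_tendsto' hsub (fun k => by rw [add_comm k n]; exact key k)

lemma den_orb (c : ℤ) (α : ℚ) (k : ℕ) : (orb c α k).den = α.den ^ (2^k) := by
  induction k with
  | zero => simp [orb]
  | succ k ih =>
    rw [orb_succ, den_step, ih, ← pow_mul, pow_succ]

lemma den_bound (c : ℤ) (α : ℚ) (L : ℝ)
    (hT : Tendsto (fun k : ℕ => ratHeight (orb c α k) / (2:ℝ)^k) atTop (nhds L)) :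
    Real.log α.den ≤ L := by
  apply ge_of_tendsto' hT
  intro k
  rw [le_div_iff₀ (by positivity)]
  have h1 := ratHeight_ge_log_den (orb c α k)
  rw [den_orb c α k] at h1
  have h2 : Real.log ((α.den : ℝ)^(2^k)) = (2^k : ℕ) * Real.log α.den := Real.log_pow _ _
  push_cast at h1 h2 ⊢
  rw [mul_comm]
  rw [h2] at h1
  exact h1

lemma helper_one_le (v : ℝ) (n : ℕ) (h : (2.7182818286 : ℝ) ≤ v^n) : 1 ≤ n * Real.log v := by
  have h1 : Real.exp 1 ≤ v^n := le_trans (le_of_lt Real.exp_one_lt_d9) h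
  calc (1:ℝ) = Real.log (Real.exp 1) := (Real.log_exp 1).symm
    _ ≤ Real.log (v^n) := Real.log_le_log (Real.exp_pos 1) h1
    _ = n * Real.log v := by rw [Real.log_pow]

lemma helper_log_le (a v : ℝ) (n : ℕ) (ha : 0 < a) (h : a ≤ v^n) : Real.log a ≤ n * Real.log v := by
  calc Real.log a ≤ Real.log (v^n) := Real.log_le_log ha h
    _ = n * Real.log v := by rw [Real.log_pow]


lemma sq_lt_abs_lt (y R : ℝ) (hR : 0 < R) (h : y^2 < 4*R^2) : |y| < 2*R := by
  by_contra h'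
  push_neg at h'
  have := pow_le_pow_left₀ (by positivity) h' 2
  nlinarith [sq_abs y]

lemma band (R x y : ℝ) (hR : 5 < R) (hxy : x^2 = y + R^2) (hy : |y| < 2*R) :
    R - 2 < |x| ∧ |x| < R + 1 := by
  obtain ⟨hy1, hy2⟩ := abs_lt.mp hy
  constructor
  · by_contra h
    push_neg at h
    have := pow_le_pow_left₀ (abs_nonneg x) h 2
    nlinarith [sq_abs x]
  · by_contra h
    push_neg at h
    have := pow_le_pow_left₀ (by linarith : (0:ℝ) ≤ R+1) h 2
    nlinarith [sq_abs x]

lemma core1 (q2 a b u : ℝ) (A B : ℤ) (hq2 : 1 ≤ q2)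
    (hA : (A:ℝ) = q2*a) (hB : (B:ℝ) = q2*b)
    (hcond : 6*q2 < a + b) (heq : (a-b)*(a+b) = u) (hu : |u| < 3) : a = b := by
  by_contra hne
  have hq2pos : (0:ℝ) < q2 := by linarith
  have hABne : A ≠ B := by
    intro h
    apply hne
    have : q2 * a = q2 * b := by rw [← hA, ← hB, h]
    exact mul_left_cancel₀ (ne_of_gt hq2pos) this
  have h1 : (1:ℝ) ≤ |(A:ℝ) - (B:ℝ)| := by
    have := Int.one_le_abs (sub_ne_zero.mpr hABne)
    exact_mod_cast this
  have h2 : |(A:ℝ) - (B:ℝ)| = q2 * |a - b| := by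
    rw [hA, hB, ← mul_sub, abs_mul, abs_of_pos hq2pos]
  have habpos : (0:ℝ) < a + b := by linarith
  have h3 : |u| = |a-b| * (a+b) := by
    rw [← heq, abs_mul, abs_of_pos habpos]
  have h4 : (0:ℝ) < |a - b| := abs_pos.mpr (sub_ne_zero.mpr hne)
  nlinarith [mul_lt_mul_of_pos_left hcond h4]

lemma core2 (R q2 a b d : ℝ) (t : ℤ) (hq2 : 1 ≤ q2)
    (ht : (t:ℝ) * (a+b) = q2 * (d - a))
    (hcond : 3*q2 + 2 < R) (hR : 5 < R)
    (ba : R-2 < a) (bb : R-2 < b) (bd : R-2 < d) (ba' : a < R+1) (bd' : d < R+1) : t = 0 := by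
  by_contra htne
  have h1 : (1:ℝ) ≤ |(t:ℝ)| := by exact_mod_cast Int.one_le_abs htne
  have habpos : (0:ℝ) < a + b := by linarith
  have h2 : |(t:ℝ)| * (a+b) = q2 * |d - a| := by
    rw [← abs_of_pos habpos, ← abs_mul, ht, abs_mul, abs_of_pos (by linarith : (0:ℝ) < q2)]
  have hda : |d - a| < 3 := abs_lt.mpr ⟨by linarith, by linarith⟩
  nlinarith [mul_le_mul_of_nonneg_right h1 (le_of_lt habpos)]

lemma hover (c : ℤ) (α : ℚ) (m : ℤ) (hm : c = -m)
    (hq : (3*(α.den:ℤ)^2+2)^2 < m)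
    (hsmall : ∀ i, 1 ≤ i → i ≤ 3 → ((orb c α i : ℚ):ℝ)^2 < 4*(m:ℝ)) :
    orb c α 2 = orb c α 0 ∨ orb c α 3 = orb c α 1 := by
  set X : ℕ → ℝ := fun k => ((orb c α k : ℚ):ℝ) with hXdef
  have hXrec : ∀ k, X (k+1) = (X k)^2 - (m:ℝ) := by
    intro k
    have h0 : X (k+1) = (X k)^2 + ((c:ℤ):ℝ) := by
      show ((orb c α (k+1) : ℚ):ℝ) = _
      rw [orb_succ]
      push_cast
      ring
    rw [h0, hm]
    push_cast
    ring
  have hD1 : (1:ℤ) ≤ (α.den:ℤ) := by exact_mod_cast α.pos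
  have hq4 : (1:ℤ) ≤ (α.den:ℤ)^2 := one_le_pow₀ hD1
  have hm25 : (25:ℤ) < m := by nlinarith [hq, hq4]
  have hmpos : (0:ℝ) < (m:ℝ) := by
    have h : (25:ℝ) < (m:ℝ) := by exact_mod_cast hm25
    linarith
  have hR2 : (Real.sqrt (m:ℝ))^2 = (m:ℝ) := Real.sq_sqrt (le_of_lt hmpos)
  have hRnn : (0:ℝ) ≤ Real.sqrt (m:ℝ) := Real.sqrt_nonneg _
  set R : ℝ := Real.sqrt (m:ℝ) with hRdef
  have hq2_1 : (1:ℝ) ≤ ((α.den:ℝ))^2 := by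
    have h : (1:ℝ) ≤ (α.den:ℝ) := by exact_mod_cast α.pos
    nlinarith
  have hcond : 3*((α.den:ℝ))^2 + 2 < R := by
    have hcastZ : (((3*(α.den:ℤ)^2+2)^2 : ℤ) : ℝ) < (m:ℝ) := by exact_mod_cast hq
    push_cast at hcastZ
    nlinarith [hR2, hRnn, hq2_1, hcastZ]
  have hR5 : (5:ℝ) < R := by linarith
  have E1 : X 1 = (X 0)^2 - m := hXrec 0
  have E2 : X 2 = (X 1)^2 - m := hXrec 1
  have E3 : X 3 = (X 2)^2 - m := hXrec 2
  have S1 : |X 1| < 2*R := sq_lt_abs_lt _ R (by linarith) (by rw [hR2]; exact hsmall 1 le_rfl (by norm_num))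
  have S2 : |X 2| < 2*R := sq_lt_abs_lt _ R (by linarith) (by rw [hR2]; exact hsmall 2 (by norm_num) (by norm_num))
  have S3 : |X 3| < 2*R := sq_lt_abs_lt _ R (by linarith) (by rw [hR2]; exact hsmall 3 (by norm_num) le_rfl)
  have B0 := band R (X 0) (X 1) hR5 (by rw [hR2]; linarith [E1]) S1
  have B1 := band R (X 1) (X 2) hR5 (by rw [hR2]; linarith [E2]) S2
  have B2 := band R (X 2) (X 3) hR5 (by rw [hR2]; linarith [E3]) S3
  -- integrality
  have hX0q : (α.den:ℝ) * X 0 = ((α.num : ℤ):ℝ) := by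
    have h := Rat.mul_den_eq_num α
    have h2 : ((α * α.den : ℚ):ℝ) = ((α.num : ℚ):ℝ) := by exact_mod_cast congrArg (fun z : ℚ => (z:ℝ)) h
    push_cast at h2
    show (α.den:ℝ) * ((orb c α 0 : ℚ):ℝ) = _
    rw [show orb c α 0 = α from rfl]
    push_cast
    linarith [h2]
  have hX1q : ((α.den:ℝ))^2 * X 1 = ((α.num^2 + c*(α.den:ℤ)^2 : ℤ):ℝ) := by
    have h0 : X 1 = (X 0)^2 + ((c:ℤ):ℝ) := by rw [hXrec 0, hm]; push_cast; ring
    rw [h0]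
    push_cast
    linear_combination ((α.den:ℝ)*X 0 + (α.num:ℝ)) * hX0q
  have hdnn : (0:ℝ) ≤ (α.den:ℝ) := by positivity
  have hA : ((|α.num| * (α.den:ℤ) : ℤ):ℝ) = ((α.den:ℝ))^2 * |X 0| := by
    have h6 : ((α.den:ℝ))^2 * |X 0| = (α.den:ℝ) * |(α.den:ℝ) * X 0| := by
      rw [abs_mul, abs_of_nonneg hdnn]; ring
    rw [h6, hX0q]
    push_cast
    ring
  have hB : ((|α.num^2 + c*(α.den:ℤ)^2| : ℤ):ℝ) = ((α.den:ℝ))^2 * |X 1| := by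
    have h6 : ((α.den:ℝ))^2 * |X 1| = |((α.den:ℝ))^2 * X 1| := by
      rw [abs_mul, abs_of_nonneg (by positivity : (0:ℝ) ≤ ((α.den:ℝ))^2)]
    rw [h6, hX1q]
    push_cast
    ring
  obtain ⟨ba, ba'⟩ := B0
  obtain ⟨bb, bb'⟩ := B1
  obtain ⟨bd, bd'⟩ := B2
  have hQ : (((α.den:ℤ)^2 : ℤ):ℝ) = ((α.den:ℝ))^2 := by push_cast; ring
  have heqq : (|X 0| - |X 1|) * (|X 0| + |X 1|) = X 1 - X 2 := by
    have h1 : |X 0|^2 = (X 0)^2 := sq_abs _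
    have h2 : |X 1|^2 = (X 1)^2 := sq_abs _
    linear_combination h1 - h2 - E1 + E2
  have hcond6 : 6*((α.den:ℝ))^2 < |X 0| + |X 1| := by linarith
  have had : |X 0| = |X 2| := by
    have hABR : ∀ t1 t2 t3 : ℤ, ((t1 - t2 - t3 : ℤ):ℝ) = (t1:ℝ) - (t2:ℝ) - (t3:ℝ) := by
      intro t1 t2 t3; push_cast; ring
    have hq2pos : (0:ℝ) < ((α.den:ℝ))^2 := by positivity
    rcases abs_cases (X 1) with ⟨e1, _⟩ | ⟨e1, _⟩ <;> rcases abs_cases (X 2) with ⟨e2, _⟩ | ⟨e2, _⟩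
    · -- X1 = b, X2 = d
      have heq2 : (|X 0| - |X 1|) * (|X 0| + |X 1|) = |X 1| - |X 2| := by
        rw [heqq, e1, e2]
      have hab := core1 ((α.den:ℝ)^2) (|X 0|) (|X 1|) (|X 1| - |X 2|)
        (|α.num| * (α.den:ℤ)) (|α.num^2 + c*(α.den:ℤ)^2|) hq2_1 hA hB hcond6 heq2
        (abs_lt.mpr ⟨by linarith, by linarith⟩)
      have h8 : |X 1| - |X 2| = 0 := by rw [← heq2, hab]; ring
      linarith
    · -- X1 = b, X2 = -d
      have heq2 : (|X 0| - |X 1|) * (|X 0| + |X 1|) = |X 1| + |X 2| := by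
        rw [heqq, e1]; linarith
      have ht : ((|α.num| * (α.den:ℤ) - |α.num^2 + c*(α.den:ℤ)^2| - (α.den:ℤ)^2 : ℤ):ℝ) * (|X 0| + |X 1|)
          = ((α.den:ℝ))^2 * (|X 2| - |X 0|) := by
        rw [hABR, hA, hB, hQ]
        linear_combination ((α.den:ℝ))^2 * heq2
      have ht0 := core2 R ((α.den:ℝ)^2) (|X 0|) (|X 1|) (|X 2|)
        (|α.num| * (α.den:ℤ) - |α.num^2 + c*(α.den:ℤ)^2| - (α.den:ℤ)^2) hq2_1
        ht hcond hR5 ba bb bd ba' bd'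
      have h7 : ((α.den:ℝ))^2 * (|X 0| - |X 1| - 1) = 0 := by
        have hc0 : ((|α.num| * (α.den:ℤ) - |α.num^2 + c*(α.den:ℤ)^2| - (α.den:ℤ)^2 : ℤ):ℝ) = 0 := by
          rw [ht0]; norm_num
        rw [hABR, hA, hB, hQ] at hc0
        linear_combination hc0
      have hab1 : |X 0| - |X 1| - 1 = 0 := by
        rcases mul_eq_zero.mp h7 with h | h
        · exact absurd h (ne_of_gt hq2pos)
        · exact h
      linear_combination heq2 - (|X 0| + |X 1|) * hab1
    · -- X1 = -b, X2 = d
      have heq2 : (|X 1| - |X 0|) * (|X 0| + |X 1|) = |X 1| + |X 2| := by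
        have h9 : (|X 0| - |X 1|) * (|X 0| + |X 1|) = -|X 1| - |X 2| := by
          rw [heqq]; linarith
        linear_combination -h9
      have ht : ((|α.num^2 + c*(α.den:ℤ)^2| - |α.num| * (α.den:ℤ) - (α.den:ℤ)^2 : ℤ):ℝ) * (|X 0| + |X 1|)
          = ((α.den:ℝ))^2 * (|X 2| - |X 0|) := by
        rw [hABR, hA, hB, hQ]
        linear_combination ((α.den:ℝ))^2 * heq2
      have ht0 := core2 R ((α.den:ℝ)^2) (|X 0|) (|X 1|) (|X 2|)
        (|α.num^2 + c*(α.den:ℤ)^2| - |α.num| * (α.den:ℤ) - (α.den:ℤ)^2) hq2_1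
        ht hcond hR5 ba bb bd ba' bd'
      have h7 : ((α.den:ℝ))^2 * (|X 1| - |X 0| - 1) = 0 := by
        have hc0 : ((|α.num^2 + c*(α.den:ℤ)^2| - |α.num| * (α.den:ℤ) - (α.den:ℤ)^2 : ℤ):ℝ) = 0 := by
          rw [ht0]; norm_num
        rw [hABR, hA, hB, hQ] at hc0
        linear_combination hc0
      have hab1 : |X 1| - |X 0| - 1 = 0 := by
        rcases mul_eq_zero.mp h7 with h | h
        · exact absurd h (ne_of_gt hq2pos)
        · exact h
      linear_combination heq2 - (|X 0| + |X 1|) * hab1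
    · -- X1 = -b, X2 = -d
      have heq2 : (|X 0| - |X 1|) * (|X 0| + |X 1|) = |X 2| - |X 1| := by
        rw [heqq]; linarith
      have hab := core1 ((α.den:ℝ)^2) (|X 0|) (|X 1|) (|X 2| - |X 1|)
        (|α.num| * (α.den:ℤ)) (|α.num^2 + c*(α.den:ℤ)^2|) hq2_1 hA hB hcond6 heq2
        (abs_lt.mpr ⟨by linarith, by linarith⟩)
      have h8 : |X 2| - |X 1| = 0 := by rw [← heq2, hab]; ring
      linarith
  rcases abs_eq_abs.mp had.symm with h02 | h02
  · left
    have h : ((orb c α 2 : ℚ):ℝ) = ((orb c α 0 : ℚ):ℝ) := h02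
    exact_mod_cast h
  · right
    have h31 : X 3 = X 1 := by rw [E3, h02, E1]; ring
    have h : ((orb c α 3 : ℚ):ℝ) = ((orb c α 1 : ℚ):ℝ) := h31
    exact_mod_cast h


def Yint (m a : ℤ) : ℕ → ℤ
  | 0 => a
  | (k+1) => (Yint m a k)^2 - m

def thr : ℕ → ℤ
  | 0 => 3
  | 1 => 3
  | 2 => 3
  | 3 => 5
  | _ => 10

def Pfin (m a : ℤ) : Prop :=
  (∃ i, i < 5 ∧ ∃ j, j < 5 ∧ i < j ∧ Yint m a i = Yint m a j) ∨
  (∃ n, n < 5 ∧ 4*m ≤ (Yint m a n)^2 ∧ thr n ≤ |Yint m a n|)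

instance (m a : ℤ) : Decidable (Pfin m a) := by
  unfold Pfin
  infer_instance

set_option maxHeartbeats 1000000 in
lemma fin_check : ∀ m ∈ Finset.Icc (2:ℤ) 25, ∀ a ∈ Finset.Icc (-9:ℤ) 9, Pfin m a := by decide

lemma pfin_all (m a : ℤ) (hm : 2 ≤ m) (hm' : m ≤ 25) : Pfin m a := by
  rcases le_or_gt 10 |a| with h | h
  · right
    exact ⟨0, by norm_num, by simp [Yint]; nlinarith [abs_nonneg a, sq_abs a], by simp [Yint, thr]; linarith⟩
  · exact fin_check m (Finset.mem_Icc.mpr ⟨hm, hm'⟩) a (Finset.mem_Icc.mpr (by rcases abs_lt.mp h with ⟨h1,h2⟩; omega))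

lemma orb_one (c : ℤ) (α : ℚ) : orb c α 1 = α^2 + (c:ℚ) := orb_succ c α 0

lemma orb_two (c : ℤ) (α : ℚ) : orb c α 2 = (α^2+(c:ℚ))^2 + (c:ℚ) := by
  rw [← orb_one]; exact orb_succ c α 1

lemma orb_three (c : ℤ) (α : ℚ) : orb c α 3 = ((α^2+(c:ℚ))^2+(c:ℚ))^2 + (c:ℚ) := by
  rw [← orb_two]; exact orb_succ c α 2

lemma orb_int (c : ℤ) (α : ℚ) (hden : α.den = 1) (m : ℤ) (hm : c = -m) (k : ℕ) :
    orb c α k = ((Yint m α.num k : ℤ) : ℚ) := by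
  induction k with
  | zero =>
    show α = _
    have h := Rat.num_div_den α
    rw [hden] at h
    simp only [Nat.cast_one, div_one] at h
    rw [← h]
    rfl
  | succ k ih =>
    rw [orb_succ, ih, hm]
    show _ = (((Yint m α.num k)^2 - m : ℤ) : ℚ)
    push_cast
    ring

lemma esc_num (c : ℤ) (α : ℚ) (L : ℝ)
    (hT : Tendsto (fun k : ℕ => ratHeight (orb c α k) / (2:ℝ)^k) atTop (nhds L))
    (M : ℝ) (hM : 1 ≤ M) (hc : |(c:ℝ)| ≤ M) (n : ℕ)
    (v : ℝ) (hv : 0 < v) (hvle : v ≤ |((orb c α n:ℚ):ℝ)|)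
    (h4 : 4*M ≤ ((orb c α n:ℚ):ℝ)^2) :
    (Real.log v - Real.log 2)/2^n ≤ L := by
  have h1 := escape_bound c α L hT M hM hc n h4
  have h2 : Real.log v ≤ Real.log |((orb c α n:ℚ):ℝ)| := Real.log_le_log hv hvle
  have h3 : (Real.log v - Real.log 2)/2^n ≤ (Real.log |((orb c α n:ℚ):ℝ)| - Real.log 2)/2^n := by
    gcongr
  linarith

set_option maxHeartbeats 3200000 in
theorem quadratic_integer_height_lower_bound (c : ℤ) (α : ℚ)
    (hw : ∀ i j : ℕ, i ≠ j →
      (fun z : ℚ => z ^ 2 + (c : ℚ))^[i] α ≠ (fun z : ℚ => z ^ 2 + (c : ℚ))^[j] α) :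
    ∀ L : ℝ,
      Tendsto (fun k : ℕ =>
          ratHeight ((fun z : ℚ => z ^ 2 + (c : ℚ))^[k] α) / (2 : ℝ) ^ k)
        atTop (nhds L) →
      (1 / 32) * max (Real.log |(c : ℝ)|) 1 ≤ L := by
  intro L hT'
  have hT : Tendsto (fun k : ℕ => ratHeight (orb c α k) / (2:ℝ)^k) atTop (nhds L) := hT'
  have hw' : ∀ i j : ℕ, i ≠ j → orb c α i ≠ orb c α j := hw
  have hdpos : 1 ≤ α.den := α.pos
  rcases (by omega : c ≤ -2 ∨ c = -1 ∨ c = 0 ∨ c = 1 ∨ 2 ≤ c) with hc | hc | hc | hc | hc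
  · -- c ≤ -2
    set m : ℤ := -c with hmdef
    have hm : c = -m := by omega
    have hm2 : (2:ℤ) ≤ m := by omega
    have hmRpos : (0:ℝ) < (m:ℝ) := by exact_mod_cast (by omega : (0:ℤ) < m)
    have habs : |(c:ℝ)| = (m:ℝ) := by
      rw [hm]; push_cast; rw [abs_neg, abs_of_pos hmRpos]
    by_cases hbig : (3*(α.den:ℤ)^2+2)^2 < m
    · -- hover or escape
      by_cases hesc : ∀ i, 1 ≤ i → i ≤ 3 → ((orb c α i : ℚ):ℝ)^2 < 4*(m:ℝ)
      · rcases hover c α m hm hbig hesc with h02 | h13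
        · exact absurd h02 (hw' 2 0 (by norm_num))
        · exact absurd h13 (hw' 3 1 (by norm_num))
      · push_neg at hesc
        obtain ⟨i, hi1, hi3, hi4⟩ := hesc
        have hD1 : (1:ℤ) ≤ (α.den:ℤ) := by exact_mod_cast hdpos
        have hq4 : (1:ℤ) ≤ (α.den:ℤ)^2 := one_le_pow₀ hD1
        have hm26 : (26:ℤ) ≤ m := by nlinarith [hbig, hq4, sq_nonneg ((α.den:ℤ)^2 - 1)]
        have hm26R : (26:ℝ) ≤ (m:ℝ) := by exact_mod_cast hm26
        have h1m : 1 ≤ Real.log (m:ℝ) := by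
          have h := helper_one_le (m:ℝ) 1 (by rw [pow_one]; linarith)
          push_cast at h
          linarith
        have hmax : max (Real.log |(c:ℝ)|) 1 = Real.log (m:ℝ) := by
          rw [habs]; exact max_eq_left h1m
        have hXn0 : (0:ℝ) < |((orb c α i:ℚ):ℝ)| := by
          nlinarith [sq_abs ((orb c α i:ℚ):ℝ), abs_nonneg ((orb c α i:ℚ):ℝ)]
        have heb := escape_bound c α L hT (m:ℝ) (by linarith) (le_of_eq habs) i hi4
        have h5 : (m:ℝ) ≤ (|((orb c α i:ℚ):ℝ)|/2)^2 := by
          nlinarith [sq_abs ((orb c α i:ℚ):ℝ)]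
        have h6 : Real.log (m:ℝ) ≤ 2*(Real.log |((orb c α i:ℚ):ℝ)| - Real.log 2) := by
          have h7 := Real.log_le_log hmRpos h5
          rw [Real.log_pow, Real.log_div (ne_of_gt hXn0) (by norm_num)] at h7
          push_cast at h7
          linarith
        rw [hmax]
        interval_cases i <;> (norm_num [Real.log_abs] at heb h6 ⊢; linarith [heb, h6, h1m])
    · push_neg at hbig
      by_cases hd1 : α.den = 1
      · -- integral case, m ≤ 25
        have hdz : ((α.den:ℤ)) = 1 := by exact_mod_cast hd1
        have hm25 : m ≤ 25 := by rw [hdz] at hbig; norm_num at hbig; omega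
        rcases pfin_all m α.num hm2 hm25 with ⟨i, hi5, j, hj5, hij, hYij⟩ | ⟨n, hn5, hG4, hGthr⟩
        · exact absurd (by rw [orb_int c α hd1 m hm i, orb_int c α hd1 m hm j, hYij])
            (hw' i j (by omega))
        · have hmR1 : (1:ℝ) ≤ (m:ℝ) := by exact_mod_cast (by omega : (1:ℤ) ≤ m)
          have hXeq : ((orb c α n : ℚ):ℝ) = ((Yint m α.num n : ℤ):ℝ) := by
            rw [orb_int c α hd1 m hm n]
            push_cast
            rfl
          have h4R : 4*(m:ℝ) ≤ ((orb c α n : ℚ):ℝ)^2 := by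
            rw [hXeq]; exact_mod_cast hG4
          have hthrR : ((thr n : ℤ):ℝ) ≤ |((orb c α n : ℚ):ℝ)| := by
            rw [hXeq, ← Int.cast_abs]; exact_mod_cast hGthr
          have hm25R : (m:ℝ) ≤ 25 := by exact_mod_cast hm25
          rw [habs]
          interval_cases n
          · have hv : (3:ℝ) ≤ |((orb c α 0 : ℚ):ℝ)| := by
              have : ((thr 0 : ℤ):ℝ) = 3 := by norm_num [thr]
              linarith [hthrR, this.symm.le]
            have heb := esc_num c α L hT (m:ℝ) hmR1 (le_of_eq habs) 0 3 (by norm_num) hv h4R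
            have hy : Real.log 3 - Real.log 2 = Real.log ((3:ℝ)/2) :=
              (Real.log_div (by norm_num) (by norm_num)).symm
            have k1 : Real.log (m:ℝ) ≤ 8 * Real.log ((3:ℝ)/2) :=
              helper_log_le _ _ 8 hmRpos (by norm_num; linarith)
            have k2 : 1 ≤ 8 * Real.log ((3:ℝ)/2) := helper_one_le _ 8 (by norm_num)
            norm_num at heb
            have hmax_le : max (Real.log (m:ℝ)) 1 ≤ 8 * Real.log ((3:ℝ)/2) := max_le k1 (by linarith)
            linarith
          · have hv : (3:ℝ) ≤ |((orb c α 1 : ℚ):ℝ)| := by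
              have : ((thr 1 : ℤ):ℝ) = 3 := by norm_num [thr]
              linarith [hthrR, this.symm.le]
            have heb := esc_num c α L hT (m:ℝ) hmR1 (le_of_eq habs) 1 3 (by norm_num) hv h4R
            have hy : Real.log 3 - Real.log 2 = Real.log ((3:ℝ)/2) :=
              (Real.log_div (by norm_num) (by norm_num)).symm
            have k1 : Real.log (m:ℝ) ≤ 8 * Real.log ((3:ℝ)/2) :=
              helper_log_le _ _ 8 hmRpos (by norm_num; linarith)
            have k2 : 1 ≤ 8 * Real.log ((3:ℝ)/2) := helper_one_le _ 8 (by norm_num)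
            norm_num at heb
            have hmax_le : max (Real.log (m:ℝ)) 1 ≤ 8 * Real.log ((3:ℝ)/2) := max_le k1 (by linarith)
            linarith
          · have hv : (3:ℝ) ≤ |((orb c α 2 : ℚ):ℝ)| := by
              have : ((thr 2 : ℤ):ℝ) = 3 := by norm_num [thr]
              linarith [hthrR, this.symm.le]
            have heb := esc_num c α L hT (m:ℝ) hmR1 (le_of_eq habs) 2 3 (by norm_num) hv h4R
            have hy : Real.log 3 - Real.log 2 = Real.log ((3:ℝ)/2) :=
              (Real.log_div (by norm_num) (by norm_num)).symm
            have k1 : Real.log (m:ℝ) ≤ 8 * Real.log ((3:ℝ)/2) :=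
              helper_log_le _ _ 8 hmRpos (by norm_num; linarith)
            have k2 : 1 ≤ 8 * Real.log ((3:ℝ)/2) := helper_one_le _ 8 (by norm_num)
            norm_num at heb
            have hmax_le : max (Real.log (m:ℝ)) 1 ≤ 8 * Real.log ((3:ℝ)/2) := max_le k1 (by linarith)
            linarith
          · have hv : (5:ℝ) ≤ |((orb c α 3 : ℚ):ℝ)| := by
              have : ((thr 3 : ℤ):ℝ) = 5 := by norm_num [thr]
              linarith [hthrR, this.symm.le]
            have heb := esc_num c α L hT (m:ℝ) hmR1 (le_of_eq habs) 3 5 (by norm_num) hv h4R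
            have hy : Real.log 5 - Real.log 2 = Real.log ((5:ℝ)/2) :=
              (Real.log_div (by norm_num) (by norm_num)).symm
            have k1 : Real.log (m:ℝ) ≤ 4 * Real.log ((5:ℝ)/2) :=
              helper_log_le _ _ 4 hmRpos (by norm_num; linarith)
            have k2 : 1 ≤ 4 * Real.log ((5:ℝ)/2) := helper_one_le _ 4 (by norm_num)
            norm_num at heb
            have hmax_le : max (Real.log (m:ℝ)) 1 ≤ 4 * Real.log ((5:ℝ)/2) := max_le k1 (by linarith)
            linarith
          · have hv : (10:ℝ) ≤ |((orb c α 4 : ℚ):ℝ)| := by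
              have : ((thr 4 : ℤ):ℝ) = 10 := by norm_num [thr]
              linarith [hthrR, this.symm.le]
            have heb := esc_num c α L hT (m:ℝ) hmR1 (le_of_eq habs) 4 10 (by norm_num) hv h4R
            have hy : Real.log 10 - Real.log 2 = Real.log ((5:ℝ)) := by
              rw [show (10:ℝ) = 5*2 by norm_num, Real.log_mul (by norm_num) (by norm_num)]
              ring
            have k1 : Real.log (m:ℝ) ≤ 2 * Real.log ((5:ℝ)) :=
              helper_log_le _ _ 2 hmRpos (by norm_num; linarith)
            have k2 : 1 ≤ 2 * Real.log ((5:ℝ)) := helper_one_le _ 2 (by norm_num)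
            norm_num at heb
            have hmax_le : max (Real.log (m:ℝ)) 1 ≤ 2 * Real.log ((5:ℝ)) := max_le k1 (by linarith)
            linarith
      · -- den ≥ 2
        have hd2 : 2 ≤ α.den := by omega
        have hden2 : (2:ℝ) ≤ (α.den:ℝ) := by exact_mod_cast hd2
        have hLq := den_bound c α L hT
        have hlogq0 : 0 ≤ Real.log (α.den:ℝ) := Real.log_nonneg (by linarith)
        have ht4 : (4:ℤ) ≤ (α.den:ℤ)^2 := by
          have : (2:ℤ) ≤ (α.den:ℤ) := by exact_mod_cast hd2
          nlinarith
        have hm_le : (m:ℝ) ≤ (α.den:ℝ)^8 := by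
          have f1 : (2:ℤ) ≤ (α.den:ℤ)^4 - 3*(α.den:ℤ)^2 - 2 := by nlinarith [ht4]
          have f2 : (0:ℤ) < (α.den:ℤ)^4 + 3*(α.den:ℤ)^2 + 2 := by positivity
          have hz : m ≤ (α.den:ℤ)^8 := by
            nlinarith [mul_nonneg (by linarith : (0:ℤ) ≤ (α.den:ℤ)^4 - 3*(α.den:ℤ)^2 - 2) (le_of_lt f2), hbig]
          calc (m:ℝ) ≤ (((α.den:ℤ)^8 : ℤ):ℝ) := by exact_mod_cast hz
            _ = (α.den:ℝ)^8 := by push_cast; ring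
        have k1 : Real.log (m:ℝ) ≤ 8 * Real.log (α.den:ℝ) :=
          helper_log_le _ _ 8 hmRpos hm_le
        have k2 : 1 ≤ 32 * Real.log (α.den:ℝ) := by
          apply helper_one_le _ 32
          calc (2.7182818286:ℝ) ≤ 2^32 := by norm_num
            _ ≤ (α.den:ℝ)^32 := pow_le_pow_left₀ (by norm_num) hden2 32
        rw [habs]
        have hmax_le : max (Real.log (m:ℝ)) 1 ≤ 32 * Real.log (α.den:ℝ) :=
          max_le (by linarith) k2
        linarith
  · -- c = -1
    subst hc
    have hgoal : (1/32) * max (Real.log |((-1:ℤ):ℝ)|) 1 = 1/32 := by norm_num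
    rw [hgoal]
    by_cases hd1 : α.den = 1
    · have h := Rat.num_div_den α
      rw [hd1] at h
      simp only [Nat.cast_one, div_one] at h
      have hα : α = ((α.num:ℤ):ℚ) := h.symm
      obtain ⟨a, ha⟩ : ∃ a : ℤ, α = (a:ℚ) := ⟨α.num, hα⟩
      have htri : a = 0 ∨ a = 1 ∨ a = -1 ∨ 2 ≤ |a| := by
        rcases le_or_gt 2 |a| with h' | h'
        · tauto
        · have h'' := abs_lt.mp h'
          omega
      rcases htri with h0|h1|hm1|h2
      · refine absurd ?_ (hw' 2 0 (by norm_num))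
        rw [orb_two, show orb (-1) α 0 = α from rfl, ha, h0]
        norm_num
      · refine absurd ?_ (hw' 3 1 (by norm_num))
        rw [orb_three, orb_one, ha, h1]
        norm_num
      · refine absurd ?_ (hw' 2 0 (by norm_num))
        rw [orb_two, show orb (-1) α 0 = α from rfl, ha, hm1]
        norm_num
      · have hX1 : ((orb (-1) α 1:ℚ):ℝ) = ((a:ℤ):ℝ)^2 - 1 := by
          rw [orb_one, ha]
          push_cast
          ring
        have haR : (2:ℝ) ≤ |((a:ℤ):ℝ)| := by
          rw [← Int.cast_abs]; exact_mod_cast h2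
        have hge3 : (3:ℝ) ≤ ((orb (-1) α 1:ℚ):ℝ) := by
          rw [hX1]; nlinarith [sq_abs ((a:ℤ):ℝ)]
        have heb := esc_num (-1) α L hT 1 le_rfl (by norm_num) 1 3 (by norm_num)
          (le_trans hge3 (le_abs_self _)) (by nlinarith)
        have hy : Real.log 3 - Real.log 2 = Real.log ((3:ℝ)/2) :=
          (Real.log_div (by norm_num) (by norm_num)).symm
        have k2 : 1 ≤ 16 * Real.log ((3:ℝ)/2) := helper_one_le _ 16 (by norm_num)
        norm_num at heb
        linarith
    · have hd2 : 2 ≤ α.den := by omega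
      have hden2 : (2:ℝ) ≤ (α.den:ℝ) := by exact_mod_cast hd2
      have hLq := den_bound (-1) α L hT
      have k2 : 1 ≤ 32 * Real.log (2:ℝ) := helper_one_le _ 32 (by norm_num)
      have hmono : Real.log (2:ℝ) ≤ Real.log (α.den:ℝ) := Real.log_le_log (by norm_num) hden2
      linarith
  · -- c = 0
    subst hc
    have hgoal : (1/32) * max (Real.log |((0:ℤ):ℝ)|) 1 = 1/32 := by
      norm_num
    rw [hgoal]
    by_cases hd1 : α.den = 1
    · have h := Rat.num_div_den α
      rw [hd1] at h
      simp only [Nat.cast_one, div_one] at h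
      have hα : α = ((α.num:ℤ):ℚ) := h.symm
      obtain ⟨a, ha⟩ : ∃ a : ℤ, α = (a:ℚ) := ⟨α.num, hα⟩
      have htri : a = 0 ∨ a = 1 ∨ a = -1 ∨ 2 ≤ |a| := by
        rcases le_or_gt 2 |a| with h' | h'
        · tauto
        · have h'' := abs_lt.mp h'
          omega
      rcases htri with h0|h1|hm1|h2
      · refine absurd ?_ (hw' 1 0 (by norm_num))
        rw [orb_one, show orb 0 α 0 = α from rfl, ha, h0]
        norm_num
      · refine absurd ?_ (hw' 1 0 (by norm_num))
        rw [orb_one, show orb 0 α 0 = α from rfl, ha, h1]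
        norm_num
      · refine absurd ?_ (hw' 2 1 (by norm_num))
        rw [orb_two, orb_one, ha, hm1]
        norm_num
      · have hX1 : ((orb 0 α 1:ℚ):ℝ) = ((a:ℤ):ℝ)^2 := by
          rw [orb_one, ha]
          push_cast
          ring
        have haR : (2:ℝ) ≤ |((a:ℤ):ℝ)| := by
          rw [← Int.cast_abs]; exact_mod_cast h2
        have hge4 : (4:ℝ) ≤ ((orb 0 α 1:ℚ):ℝ) := by
          rw [hX1]; nlinarith [sq_abs ((a:ℤ):ℝ)]
        have heb := esc_num 0 α L hT 1 le_rfl (by norm_num) 1 4 (by norm_num)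
          (le_trans hge4 (le_abs_self _)) (by nlinarith)
        have hy : Real.log 4 - Real.log 2 = Real.log (2:ℝ) := by
          rw [show (4:ℝ) = 2*2 by norm_num, Real.log_mul (by norm_num) (by norm_num)]
          ring
        have k2 : 1 ≤ 16 * Real.log (2:ℝ) := helper_one_le _ 16 (by norm_num)
        norm_num at heb
        linarith
    · have hd2 : 2 ≤ α.den := by omega
      have hden2 : (2:ℝ) ≤ (α.den:ℝ) := by exact_mod_cast hd2
      have hLq := den_bound 0 α L hT
      have k2 : 1 ≤ 32 * Real.log (2:ℝ) := helper_one_le _ 32 (by norm_num)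
      have hmono : Real.log (2:ℝ) ≤ Real.log (α.den:ℝ) := Real.log_le_log (by norm_num) hden2
      linarith
  · -- c = 1
    subst hc
    have hgoal : (1/32) * max (Real.log |((1:ℤ):ℝ)|) 1 = 1/32 := by norm_num
    rw [hgoal]
    have r1 : (1:ℝ) ≤ ((orb 1 α 1:ℚ):ℝ) := by
      have h := orb_cast_succ 1 α 0
      push_cast at h
      nlinarith [sq_nonneg ((orb 1 α 0:ℚ):ℝ), h]
    have r2 : (2:ℝ) ≤ ((orb 1 α 2:ℚ):ℝ) := by
      have h := orb_cast_succ 1 α 1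
      push_cast at h
      nlinarith [r1, h]
    have r3 : (5:ℝ) ≤ ((orb 1 α 3:ℚ):ℝ) := by
      have h := orb_cast_succ 1 α 2
      push_cast at h
      nlinarith [r2, h]
    have heb := esc_num 1 α L hT 1 le_rfl (by norm_num) 3 5 (by norm_num)
      (le_trans r3 (le_abs_self _)) (by nlinarith)
    have hy : Real.log 5 - Real.log 2 = Real.log ((5:ℝ)/2) :=
      (Real.log_div (by norm_num) (by norm_num)).symm
    have k2 : 1 ≤ 4 * Real.log ((5:ℝ)/2) := helper_one_le _ 4 (by norm_num)
    norm_num at heb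
    linarith
  · -- c ≥ 2
    have hcR : (2:ℝ) ≤ (c:ℝ) := by exact_mod_cast hc
    have habs : |(c:ℝ)| = (c:ℝ) := abs_of_pos (by linarith)
    have r1 : (c:ℝ) ≤ ((orb c α 1:ℚ):ℝ) := by
      have h := orb_cast_succ c α 0
      nlinarith [sq_nonneg ((orb c α 0:ℚ):ℝ), h]
    have r2 : (c:ℝ)^2 ≤ ((orb c α 2:ℚ):ℝ) := by
      have h := orb_cast_succ c α 1
      nlinarith [r1, h]
    have hsq : ((c:ℝ)^2)^2 ≤ ((orb c α 2:ℚ):ℝ)^2 := by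
      nlinarith [r2, sq_nonneg ((c:ℝ))]
    have t1 : 2*(c:ℝ) ≤ (c:ℝ)^2 := by
      nlinarith [mul_nonneg (by linarith : (0:ℝ) ≤ (c:ℝ) - 2) (by linarith : (0:ℝ) ≤ (c:ℝ))]
    have t2 : (2*(c:ℝ))^2 ≤ ((c:ℝ)^2)^2 := pow_le_pow_left₀ (by linarith) t1 2
    have hc4 : 4*(c:ℝ) ≤ ((c:ℝ)^2)^2 := by nlinarith [t1, t2, hcR]
    have heb := esc_num c α L hT (c:ℝ) (by linarith) (le_of_eq habs) 2 ((c:ℝ)^2)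
      (by positivity) (le_trans r2 (le_abs_self _)) (by linarith)
    have hy : Real.log ((c:ℝ)^2) = 2 * Real.log (c:ℝ) := by
      rw [show ((c:ℝ)^2) = (c:ℝ)^(2:ℕ) by norm_num, Real.log_pow]
      push_cast
      ring
    have hlog2c : Real.log 2 ≤ Real.log (c:ℝ) := Real.log_le_log (by norm_num) hcR
    have hlogc0 : 0 ≤ Real.log (c:ℝ) := Real.log_nonneg (by linarith)
    have k2 : 1 ≤ 8 * Real.log (c:ℝ) := by
      apply helper_one_le _ 8
      calc (2.7182818286:ℝ) ≤ 2^8 := by norm_num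
        _ ≤ (c:ℝ)^8 := pow_le_pow_left₀ (by norm_num) hcR 8
    rw [habs]
    have hmax_le : max (Real.log (c:ℝ)) 1 ≤ 8 * Real.log (c:ℝ) := max_le (by linarith) k2
    norm_num at heb
    linarith
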